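/- Let τ₂ < τ₁ be real thresholds and q ∈ (0,1]. Define M_t = (∫_{{τ₂ ≤ A < τ₁}} t dμ + (1−q)·∫_{{A ≥ τ₁}} t dμ) / (μ{τ₂ ≤ A < τ₁} + (1−q)·μ{A ≥ τ₁}), and analogously M_s with s in place of t. Then (∫_{{A ≥ τ₁}} t dμ)/μ{A ≥ τ₁} > M_t and (∫_{{A ≥ τ₁}} s dμ)/μ{A ≥ τ₁} > M_s; that is, the more selective university's attendees have strictly higher average type and strictly higher average soft skill than the less selective university's attendees. -/

import Mathlib

open MeasureTheory ProbabilityTheory Real Set Filter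
open scoped ENNReal NNReal

/-- Product of three standard Gaussian measures on ℝ³, coordinates (t, s, z). -/
noncomputable def mu3 : Measure (ℝ × ℝ × ℝ) :=
  (gaussianReal 0 1).prod ((gaussianReal 0 1).prod (gaussianReal 0 1))

namespace Stmt14Aux


noncomputable def phi (x : ℝ) : ℝ := (Real.sqrt (2 * π))⁻¹ * rexp (-x ^ 2 / 2)

lemma phi_eq (x : ℝ) : phi x = gaussianPDFReal 0 1 x := by
  simp [phi, gaussianPDFReal]

lemma phi_pos (x : ℝ) : 0 < phi x := by
  rw [phi_eq]; exact gaussianPDFReal_pos 0 1 x one_ne_zero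

lemma phi_le (x : ℝ) : phi x ≤ (Real.sqrt (2 * π))⁻¹ := by
  unfold phi
  have h1 : rexp (-x ^ 2 / 2) ≤ 1 := by
    rw [Real.exp_le_one_iff]; nlinarith [sq_nonneg x]
  have h2 : (0:ℝ) ≤ (Real.sqrt (2 * π))⁻¹ := by positivity
  nlinarith

lemma continuous_phi : Continuous phi := by
  unfold phi; fun_prop

lemma gauss_eq : gaussianReal 0 1 = volume.withDensity (fun x => ENNReal.ofReal (phi x)) := by
  rw [gaussianReal_of_var_ne_zero 0 one_ne_zero]
  congr 1; ext x; rw [gaussianPDF, ← phi_eq]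

lemma integral_gauss (g : ℝ → ℝ) :
    ∫ x, g x ∂(gaussianReal 0 1) = ∫ x, phi x * g x := by
  rw [gauss_eq]
  have h : (fun x : ℝ => ENNReal.ofReal (phi x))
      = (fun x : ℝ => ((Real.toNNReal (phi x) : ℝ≥0) : ℝ≥0∞)) := rfl
  rw [h, integral_withDensity_eq_integral_smul
    (continuous_phi.measurable.real_toNNReal) g]
  congr 1; ext x
  simp [NNReal.smul_def, Real.coe_toNNReal _ (phi_pos x).le]

lemma integrable_gauss_iff (g : ℝ → ℝ) :
    Integrable g (gaussianReal 0 1) ↔ Integrable (fun x => g x * phi x) volume := by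
  rw [gauss_eq, integrable_withDensity_iff (by
    exact (ENNReal.measurable_ofReal.comp continuous_phi.measurable))
    (Filter.Eventually.of_forall fun x => ENNReal.ofReal_lt_top)]
  simp_rw [ENNReal.toReal_ofReal (phi_pos _).le]

lemma integrable_mul_phi : Integrable (fun x : ℝ => x * phi x) volume := by
  have h := integrable_mul_exp_neg_mul_sq (b := (2:ℝ)⁻¹) (by norm_num)
  have h2 := h.const_mul ((Real.sqrt (2 * π))⁻¹)
  refine h2.congr (Filter.Eventually.of_forall fun x => ?_)
  unfold phi; ring_nf

lemma integrable_id_gauss : Integrable (fun x : ℝ => x) (gaussianReal 0 1) := by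
  rw [integrable_gauss_iff]; exact integrable_mul_phi

lemma gauss_mean : ∫ x, x ∂(gaussianReal 0 1) = 0 := by
  rw [integral_gauss]
  have h : ∫ x : ℝ, phi x * x = ∫ x : ℝ, phi (-x) * (-x) := by
    rw [← integral_neg_eq_self fun x => phi x * x]
  have hphi : ∀ x : ℝ, phi (-x) = phi x := fun x => by unfold phi; ring_nf
  have h2 : ∫ x : ℝ, phi (-x) * (-x) = - ∫ x : ℝ, phi x * x := by
    simp_rw [hphi, mul_neg, integral_neg]
  linarith [h, h2]

lemma hasDerivAt_neg_phi (x : ℝ) : HasDerivAt (fun y => -phi y) (x * phi x) x := by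
  have h1 : HasDerivAt (fun y : ℝ => -y ^ 2 / 2) (-x) x := by
    have := ((hasDerivAt_pow 2 x).neg).div_const 2
    simpa using this.congr_deriv (by ring_nf)
  have h2 := (h1.exp.const_mul ((Real.sqrt (2 * π))⁻¹)).neg
  refine h2.congr_deriv ?_
  unfold phi; ring

lemma tendsto_neg_phi : Tendsto (fun x => -phi x) atTop (nhds 0) := by
  have h2 : Tendsto (fun x : ℝ => -x ^ 2 / 2) atTop atBot := by
    apply Filter.Tendsto.atBot_div_const (by norm_num)
    exact tendsto_neg_atBot_iff.mpr (tendsto_pow_atTop (by norm_num))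
  have h3 : Tendsto phi atTop (nhds 0) := by
    have h4 := (Real.tendsto_exp_atBot.comp h2).const_mul ((Real.sqrt (2 * π))⁻¹)
    rw [mul_zero] at h4
    exact h4.congr (fun x => by simp [phi, Function.comp])
  simpa using h3.neg

lemma stein (a : ℝ) : ∫ x in Ici a, x ∂(gaussianReal 0 1) = phi a := by
  rw [← integral_indicator measurableSet_Ici, integral_gauss]
  have h : (fun x => phi x * (Ici a).indicator (fun x => x) x)
      = (Ici a).indicator (fun x => x * phi x) := by
    ext x; by_cases hx : x ∈ Ici a <;> simp [hx, indicator_of_mem, indicator_of_notMem, mul_comm]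
  rw [h, integral_indicator measurableSet_Ici, MeasureTheory.integral_Ici_eq_integral_Ioi]
  have := integral_Ioi_of_hasDerivAt_of_tendsto
    (f := fun y => -phi y) (f' := fun x => x * phi x) (a := a)
    (by exact (continuous_neg.comp (by unfold phi; fun_prop)).continuousWithinAt)
    (fun x _ => hasDerivAt_neg_phi x)
    integrable_mul_phi.integrableOn tendsto_neg_phi
  rw [this]; ring

lemma stein_set (β c τ : ℝ) (hβ : 0 < β) :
    ∫ x, ({x : ℝ | τ ≤ β * x + c}).indicator (fun x => x) x ∂(gaussianReal 0 1)
      = phi ((τ - c)/β) := by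
  have hset : {x : ℝ | τ ≤ β * x + c} = Ici ((τ - c)/β) := by
    ext x
    simp only [mem_setOf_eq, mem_Ici, div_le_iff₀ hβ]
    constructor <;> intro h <;> nlinarith
  rw [hset, integral_indicator measurableSet_Ici, stein]

lemma conv (a b d : ℝ) (ha : 0 < a) :
    ∫ y, phi ((d - b*y)/a) ∂(gaussianReal 0 1)
      = (a / Real.sqrt (a^2+b^2)) * phi (d / Real.sqrt (a^2+b^2)) := by
  have hu : 0 < Real.sqrt (a^2+b^2) := Real.sqrt_pos.mpr (by positivity)
  set u := Real.sqrt (a^2+b^2) with hu_def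
  have hu2 : u^2 = a^2 + b^2 := Real.sq_sqrt (by positivity)
  have ha' : a ≠ 0 := ha.ne'
  have hu' : u ≠ 0 := hu.ne'
  rw [integral_gauss]
  have key : ∀ y : ℝ, phi y * phi ((d - b*y)/a)
      = ((√(2*π))⁻¹ * (√(2*π))⁻¹ * rexp (-(d/u)^2/2))
        * rexp (-(u^2/(2*a^2)) * (y - b*d/u^2)^2) := by
    intro y
    have expident : -y^2/2 + -((d - b*y)/a)^2/2
        = -(d/u)^2/2 + -(u^2/(2*a^2)) * (y - b*d/u^2)^2 := by
      have hab : a^2 + b^2 ≠ 0 := by positivity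
      rw [div_pow d u, hu2]
      field_simp
      ring
    unfold phi
    rw [mul_mul_mul_comm, ← Real.exp_add, expident, Real.exp_add]
    ring
  simp_rw [key]
  rw [MeasureTheory.integral_const_mul]
  have shift : ∫ y : ℝ, rexp (-(u^2/(2*a^2)) * (y - b*d/u^2)^2)
      = ∫ y : ℝ, rexp (-(u^2/(2*a^2)) * y^2) :=
    integral_sub_right_eq_self (fun y => rexp (-(u^2/(2*a^2)) * y^2)) (b*d/u^2)
  rw [shift, integral_gaussian]
  have hval : Real.sqrt (π / (u^2/(2*a^2))) = Real.sqrt (2*π) * a / u := by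
    rw [show π / (u^2/(2*a^2)) = (2*π) * a^2 / u^2 by field_simp]
    rw [Real.sqrt_div (by positivity), Real.sqrt_mul (by positivity), Real.sqrt_sq ha.le,
      Real.sqrt_sq hu.le]
  rw [hval]
  unfold phi
  field_simp

lemma triple (a b c τ : ℝ) (ha : 0 < a) :
    ∫ y, (∫ z, phi ((τ - b*y - c*z)/a) ∂(gaussianReal 0 1)) ∂(gaussianReal 0 1)
      = (a / Real.sqrt (a^2+b^2+c^2)) * phi (τ / Real.sqrt (a^2+b^2+c^2)) := by
  have hu1 : 0 < Real.sqrt (a^2+c^2) := Real.sqrt_pos.mpr (by positivity)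
  set u1 := Real.sqrt (a^2+c^2) with hu1_def
  have hu12 : u1^2 = a^2 + c^2 := Real.sq_sqrt (by positivity)
  have hinner : ∀ y : ℝ, ∫ z, phi ((τ - b*y - c*z)/a) ∂(gaussianReal 0 1)
      = (a/u1) * phi ((τ - b*y)/u1) := by
    intro y
    have : (fun z => phi ((τ - b*y - c*z)/a)) = (fun z => phi (((τ - b*y) - c*z)/a)) := by
      funext z; ring_nf
    rw [this, conv a c (τ - b*y) ha]
  simp_rw [hinner]
  rw [MeasureTheory.integral_const_mul, conv u1 b τ hu1]
  have hsum : u1^2 + b^2 = a^2 + b^2 + c^2 := by rw [hu12]; ring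
  rw [hsum]
  have hu : 0 < Real.sqrt (a^2+b^2+c^2) := Real.sqrt_pos.mpr (by positivity)
  field_simp

lemma mu3_eq : mu3 = (gaussianReal 0 1).prod ((gaussianReal 0 1).prod (gaussianReal 0 1)) := rfl

instance : IsProbabilityMeasure mu3 := by
  rw [mu3_eq]; infer_instance

lemma integrable_of_bounded {X : Type*} [MeasurableSpace X] {μ : Measure X} [IsFiniteMeasure μ]
    {f : X → ℝ} (hf : AEStronglyMeasurable f μ) {C : ℝ} (h : ∀ x, |f x| ≤ C) :
    Integrable f μ :=
  Integrable.mono' (integrable_const C) hf (Eventually.of_forall fun x => by simpa using h x)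

lemma integrable_phi_comp {X : Type*} [MeasurableSpace X] {μ : Measure X} [IsFiniteMeasure μ]
    {g : X → ℝ} (hg : Measurable g) : Integrable (fun x => phi (g x)) μ :=
  integrable_of_bounded (continuous_phi.measurable.comp hg).aestronglyMeasurable
    (fun x => by rw [abs_of_pos (phi_pos _)]; exact phi_le _)

lemma map_fst_mu3 : mu3.map Prod.fst = gaussianReal 0 1 := by
  rw [mu3_eq, Measure.map_fst_prod]; simp

lemma integrable_fst_mu3 : Integrable (fun p : ℝ × ℝ × ℝ => p.1) mu3 := by
  have h : Integrable (fun x : ℝ => x) (mu3.map Prod.fst) := by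
    rw [map_fst_mu3]; exact integrable_id_gauss
  exact (integrable_map_measure aestronglyMeasurable_id measurable_fst.aemeasurable).mp h

lemma integrable_fst_G2 :
    Integrable (fun q : ℝ × ℝ => q.1) ((gaussianReal 0 1).prod (gaussianReal 0 1)) := by
  have hm : ((gaussianReal 0 1).prod (gaussianReal 0 1)).map Prod.fst = gaussianReal 0 1 := by
    rw [Measure.map_fst_prod]; simp
  have h : Integrable (fun x : ℝ => x)
      (((gaussianReal 0 1).prod (gaussianReal 0 1)).map Prod.fst) := by
    rw [hm]; exact integrable_id_gauss
  exact (integrable_map_measure aestronglyMeasurable_id measurable_fst.aemeasurable).mp h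

lemma map_s_mu3 : mu3.map (fun p : ℝ × ℝ × ℝ => p.2.1) = gaussianReal 0 1 := by
  have : (fun p : ℝ × ℝ × ℝ => p.2.1) = Prod.fst ∘ Prod.snd := rfl
  rw [this, ← Measure.map_map measurable_fst measurable_snd, mu3_eq, Measure.map_snd_prod]
  simp [Measure.map_fst_prod]

lemma integrable_s_mu3 : Integrable (fun p : ℝ × ℝ × ℝ => p.2.1) mu3 := by
  have h : Integrable (fun x : ℝ => x) (mu3.map (fun p : ℝ × ℝ × ℝ => p.2.1)) := by
    rw [map_s_mu3]; exact integrable_id_gauss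
  exact (integrable_map_measure aestronglyMeasurable_id
    (measurable_snd.fst).aemeasurable).mp h

lemma map_z_mu3 : mu3.map (fun p : ℝ × ℝ × ℝ => p.2.2) = gaussianReal 0 1 := by
  have : (fun p : ℝ × ℝ × ℝ => p.2.2) = Prod.snd ∘ Prod.snd := rfl
  rw [this, ← Measure.map_map measurable_snd measurable_snd, mu3_eq, Measure.map_snd_prod]
  simp [Measure.map_snd_prod]

lemma integrable_z_mu3 : Integrable (fun p : ℝ × ℝ × ℝ => p.2.2) mu3 := by
  have h : Integrable (fun x : ℝ => x) (mu3.map (fun p : ℝ × ℝ × ℝ => p.2.2)) := by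
    rw [map_z_mu3]; exact integrable_id_gauss
  exact (integrable_map_measure aestronglyMeasurable_id
    (measurable_snd.snd).aemeasurable).mp h

lemma Jt (a b c τ : ℝ) (ha : 0 < a) :
    ∫ p in {p : ℝ × ℝ × ℝ | τ ≤ a*p.1 + b*p.2.1 + c*p.2.2}, p.1 ∂mu3
      = (a / Real.sqrt (a^2+b^2+c^2)) * phi (τ / Real.sqrt (a^2+b^2+c^2)) := by
  set S := {p : ℝ × ℝ × ℝ | τ ≤ a*p.1 + b*p.2.1 + c*p.2.2} with hS_def
  have hS : MeasurableSet S := measurableSet_le measurable_const (by fun_prop)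
  have hFint : Integrable (S.indicator fun p : ℝ × ℝ × ℝ => p.1) mu3 :=
    integrable_fst_mu3.indicator hS
  rw [← integral_indicator hS]
  rw [mu3_eq] at hFint ⊢
  rw [integral_prod_symm _ hFint]
  have hsec : ∀ q : ℝ × ℝ,
      (∫ t, (S.indicator fun p : ℝ × ℝ × ℝ => p.1) (t, q) ∂(gaussianReal 0 1))
        = phi ((τ - (b*q.1 + c*q.2))/a) := by
    intro q
    have hfun : (fun t => (S.indicator fun p : ℝ × ℝ × ℝ => p.1) (t, q))
        = ({x : ℝ | τ ≤ a * x + (b*q.1 + c*q.2)}).indicator (fun x => x) := by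
      funext t
      simp only [indicator_apply, hS_def, mem_setOf_eq]
      have : (τ ≤ a*t + b*q.1 + c*q.2) ↔ (τ ≤ a * t + (b*q.1 + c*q.2)) := by
        constructor <;> intro h <;> linarith
      rw [if_congr this rfl rfl]
    rw [hfun, stein_set a (b*q.1 + c*q.2) τ ha]
  simp_rw [hsec]
  rw [integral_prod _ (integrable_phi_comp (by fun_prop))]
  have : ∀ y : ℝ, (∫ z, phi ((τ - (b*y + c*z))/a) ∂(gaussianReal 0 1))
      = ∫ z, phi ((τ - b*y - c*z)/a) ∂(gaussianReal 0 1) := by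
    intro y; congr 1; funext z; ring_nf
  simp_rw [this]
  exact triple a b c τ ha

lemma integrable_snd_G2 :
    Integrable (fun q : ℝ × ℝ => q.2) ((gaussianReal 0 1).prod (gaussianReal 0 1)) := by
  have hm : ((gaussianReal 0 1).prod (gaussianReal 0 1)).map Prod.snd = gaussianReal 0 1 := by
    rw [Measure.map_snd_prod]; simp
  have h : Integrable (fun x : ℝ => x)
      (((gaussianReal 0 1).prod (gaussianReal 0 1)).map Prod.snd) := by
    rw [hm]; exact integrable_id_gauss
  exact (integrable_map_measure aestronglyMeasurable_id measurable_snd.aemeasurable).mp h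

lemma Js (a b c τ : ℝ) (hb : 0 < b) :
    ∫ p in {p : ℝ × ℝ × ℝ | τ ≤ a*p.1 + b*p.2.1 + c*p.2.2}, p.2.1 ∂mu3
      = (b / Real.sqrt (a^2+b^2+c^2)) * phi (τ / Real.sqrt (a^2+b^2+c^2)) := by
  set S := {p : ℝ × ℝ × ℝ | τ ≤ a*p.1 + b*p.2.1 + c*p.2.2} with hS_def
  have hS : MeasurableSet S := measurableSet_le measurable_const (by fun_prop)
  have hFint : Integrable (S.indicator fun p : ℝ × ℝ × ℝ => p.2.1) mu3 :=
    integrable_s_mu3.indicator hS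
  have hFmeas : Measurable (S.indicator fun p : ℝ × ℝ × ℝ => p.2.1) :=
    (measurable_snd.fst).indicator hS
  rw [← integral_indicator hS]
  rw [mu3_eq] at hFint ⊢
  rw [integral_prod _ hFint]
  have hsec : ∀ t : ℝ,
      (∫ q, (S.indicator fun p : ℝ × ℝ × ℝ => p.2.1) (t, q)
          ∂((gaussianReal 0 1).prod (gaussianReal 0 1)))
        = ∫ z, phi ((τ - (a*t + c*z))/b) ∂(gaussianReal 0 1) := by
    intro t
    have hint : Integrable (fun q : ℝ × ℝ => (S.indicator fun p : ℝ × ℝ × ℝ => p.2.1) (t, q))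
        ((gaussianReal 0 1).prod (gaussianReal 0 1)) := by
      refine Integrable.mono' integrable_fst_G2.abs
        (hFmeas.comp measurable_prodMk_left).aestronglyMeasurable
        (Eventually.of_forall fun q => ?_)
      by_cases hq : (t, q) ∈ S
      · rw [indicator_of_mem hq]; simp [Real.norm_eq_abs]
      · rw [indicator_of_notMem hq]; simp [abs_nonneg]
    rw [integral_prod_symm _ hint]
    congr 1
    funext z
    have hfun : (fun s => (S.indicator fun p : ℝ × ℝ × ℝ => p.2.1) (t, (s, z)))
        = ({x : ℝ | τ ≤ b * x + (a*t + c*z)}).indicator (fun x => x) := by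
      funext s
      simp only [indicator_apply, hS_def, mem_setOf_eq]
      have : (τ ≤ a*t + b*s + c*z) ↔ (τ ≤ b * s + (a*t + c*z)) := by
        constructor <;> intro h <;> linarith
      rw [if_congr this rfl rfl]
    rw [hfun, stein_set b (a*t + c*z) τ hb]
  simp_rw [hsec]
  have hform : ∀ t : ℝ, (∫ z, phi ((τ - (a*t + c*z))/b) ∂(gaussianReal 0 1))
      = ∫ z, phi ((τ - a*t - c*z)/b) ∂(gaussianReal 0 1) := by
    intro t; congr 1; funext z; ring_nf
  simp_rw [hform]
  have h2 := triple b a c τ hb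
  rw [show b^2+a^2+c^2 = a^2+b^2+c^2 by ring] at h2
  exact h2

lemma Jz (a b c τ : ℝ) (hc : 0 ≤ c) :
    ∫ p in {p : ℝ × ℝ × ℝ | τ ≤ a*p.1 + b*p.2.1 + c*p.2.2}, p.2.2 ∂mu3
      = (c / Real.sqrt (a^2+b^2+c^2)) * phi (τ / Real.sqrt (a^2+b^2+c^2)) := by
  set S := {p : ℝ × ℝ × ℝ | τ ≤ a*p.1 + b*p.2.1 + c*p.2.2} with hS_def
  have hS : MeasurableSet S := measurableSet_le measurable_const (by fun_prop)
  have hFint : Integrable (S.indicator fun p : ℝ × ℝ × ℝ => p.2.2) mu3 :=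
    integrable_z_mu3.indicator hS
  have hFmeas : Measurable (S.indicator fun p : ℝ × ℝ × ℝ => p.2.2) :=
    (measurable_snd.snd).indicator hS
  rw [← integral_indicator hS]
  rw [mu3_eq] at hFint ⊢
  rw [integral_prod _ hFint]
  have hsec : ∀ t : ℝ,
      (∫ q, (S.indicator fun p : ℝ × ℝ × ℝ => p.2.2) (t, q)
          ∂((gaussianReal 0 1).prod (gaussianReal 0 1)))
        = ∫ s, (∫ z, ({z : ℝ | τ ≤ c * z + (a*t + b*s)}).indicator (fun z => z) z
            ∂(gaussianReal 0 1)) ∂(gaussianReal 0 1) := by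
    intro t
    have hint : Integrable (fun q : ℝ × ℝ => (S.indicator fun p : ℝ × ℝ × ℝ => p.2.2) (t, q))
        ((gaussianReal 0 1).prod (gaussianReal 0 1)) := by
      refine Integrable.mono' integrable_snd_G2.abs
        (hFmeas.comp measurable_prodMk_left).aestronglyMeasurable
        (Eventually.of_forall fun q => ?_)
      by_cases hq : (t, q) ∈ S
      · rw [indicator_of_mem hq]; simp [Real.norm_eq_abs]
      · rw [indicator_of_notMem hq]; simp [abs_nonneg]
    rw [integral_prod _ hint]
    congr 1
    funext s
    congr 1
    funext z
    simp only [indicator_apply, hS_def, mem_setOf_eq]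
    have : (τ ≤ a*t + b*s + c*z) ↔ (τ ≤ c * z + (a*t + b*s)) := by
      constructor <;> intro h <;> linarith
    rw [if_congr this rfl rfl]
  simp_rw [hsec]
  rcases eq_or_lt_of_le hc with hc0 | hcpos
  · subst hc0
    have hzero : ∀ t s : ℝ, (∫ z, ({z : ℝ | τ ≤ (0:ℝ) * z + (a*t + b*s)}).indicator
        (fun z => z) z ∂(gaussianReal 0 1)) = 0 := by
      intro t s
      by_cases h : τ ≤ a*t + b*s
      · have : {z : ℝ | τ ≤ (0:ℝ) * z + (a*t + b*s)} = univ := by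
          ext z; simp [h]
        rw [this, indicator_univ, gauss_mean]
      · have : {z : ℝ | τ ≤ (0:ℝ) * z + (a*t + b*s)} = ∅ := by
          ext z; simp [h]
        rw [this, indicator_empty, integral_zero]
    simp_rw [hzero, integral_zero]
    simp
  · have hz : ∀ t s : ℝ, (∫ z, ({z : ℝ | τ ≤ c * z + (a*t + b*s)}).indicator
        (fun z => z) z ∂(gaussianReal 0 1)) = phi ((τ - (a*t + b*s))/c) :=
      fun t s => stein_set c (a*t + b*s) τ hcpos
    simp_rw [hz]
    have hinner : ∀ t : ℝ, (∫ s, phi ((τ - (a*t + b*s))/c) ∂(gaussianReal 0 1))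
        = ∫ s, phi ((τ - a*t - b*s)/c) ∂(gaussianReal 0 1) := by
      intro t; congr 1; funext s; ring_nf
    simp_rw [hinner]
    have h2 := triple c a b τ hcpos
    rw [show c^2+a^2+b^2 = a^2+b^2+c^2 by ring] at h2
    exact h2

end Stmt14Aux

open Stmt14Aux in
set_option maxHeartbeats 1000000 in
theorem stmt14 (α σZ : ℝ) (hα : α ∈ Set.Ioo (0 : ℝ) 1) (hσZ : 0 ≤ σZ)
    (A : ℝ × ℝ × ℝ → ℝ)
    (hA : A = fun p => α * p.1 + (1 - α) * p.2.1 + σZ * p.2.2)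
    (τ₁ τ₂ q : ℝ) (hτ : τ₂ < τ₁) (hq : q ∈ Set.Ioc (0 : ℝ) 1)
    (Mt Ms D : ℝ)
    (hD : D = (mu3 {p : ℝ × ℝ × ℝ | τ₂ ≤ A p ∧ A p < τ₁}).toReal
        + (1 - q) * (mu3 {p : ℝ × ℝ × ℝ | τ₁ ≤ A p}).toReal)
    (hMt : Mt = ((∫ p in {p : ℝ × ℝ × ℝ | τ₂ ≤ A p ∧ A p < τ₁}, p.1 ∂mu3)
        + (1 - q) * ∫ p in {p : ℝ × ℝ × ℝ | τ₁ ≤ A p}, p.1 ∂mu3) / D)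
    (hMs : Ms = ((∫ p in {p : ℝ × ℝ × ℝ | τ₂ ≤ A p ∧ A p < τ₁}, p.2.1 ∂mu3)
        + (1 - q) * ∫ p in {p : ℝ × ℝ × ℝ | τ₁ ≤ A p}, p.2.1 ∂mu3) / D) :
    (∫ p in {p : ℝ × ℝ × ℝ | τ₁ ≤ A p}, p.1 ∂mu3) /
        (mu3 {p : ℝ × ℝ × ℝ | τ₁ ≤ A p}).toReal > Mt ∧
    (∫ p in {p : ℝ × ℝ × ℝ | τ₁ ≤ A p}, p.2.1 ∂mu3) /
        (mu3 {p : ℝ × ℝ × ℝ | τ₁ ≤ A p}).toReal > Ms := by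
  obtain ⟨hα0, hα1⟩ := hα
  obtain ⟨hq0, hq1⟩ := hq
  have hb0 : (0:ℝ) < 1 - α := by linarith
  -- sets
  set S1 := {p : ℝ × ℝ × ℝ | τ₁ ≤ A p} with hS1_def
  set M := {p : ℝ × ℝ × ℝ | τ₂ ≤ A p ∧ A p < τ₁} with hM_def
  have hS2eq : {p : ℝ × ℝ × ℝ | τ₂ ≤ A p} = M ∪ S1 := by
    ext p
    simp only [hM_def, hS1_def, mem_union, mem_setOf_eq]
    constructor
    · intro h
      by_cases hlt : A p < τ₁
      · exact Or.inl ⟨h, hlt⟩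
      · exact Or.inr (by linarith)
    · rintro (⟨h1, _⟩ | h) <;> linarith
  have hdisj : Disjoint M S1 := by
    rw [Set.disjoint_left]
    rintro p ⟨_, h2⟩ h3
    rw [hS1_def, mem_setOf_eq] at h3
    linarith
  have hcont : Continuous A := by rw [hA]; fun_prop
  have hS1m : MeasurableSet S1 := measurableSet_le measurable_const hcont.measurable
  have hMm : MeasurableSet M :=
    (measurableSet_le measurable_const hcont.measurable).inter
      (measurableSet_lt hcont.measurable measurable_const)
  -- w
  have hwpos : (0:ℝ) < Real.sqrt (α^2 + (1-α)^2 + σZ^2) := Real.sqrt_pos.mpr (by positivity)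
  set w := Real.sqrt (α^2 + (1-α)^2 + σZ^2) with hw_def
  have hw2 : w^2 = α^2 + (1-α)^2 + σZ^2 := Real.sq_sqrt (by positivity)
  -- set rewriting to explicit linear form
  have hAset : ∀ τ : ℝ, {p : ℝ × ℝ × ℝ | τ ≤ A p}
      = {p : ℝ × ℝ × ℝ | τ ≤ α*p.1 + (1-α)*p.2.1 + σZ*p.2.2} := by
    intro τ; ext p; simp only [mem_setOf_eq, hA]
  -- coordinate integrals over the half-spaces
  have hJt1 : ∫ p in S1, p.1 ∂mu3 = (α/w) * phi (τ₁/w) := by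
    rw [hS1_def, hAset τ₁, Jt α (1-α) σZ τ₁ hα0]
  have hJs1 : ∫ p in S1, p.2.1 ∂mu3 = ((1-α)/w) * phi (τ₁/w) := by
    rw [hS1_def, hAset τ₁, Js α (1-α) σZ τ₁ hb0]
  have hJz1 : ∫ p in S1, p.2.2 ∂mu3 = (σZ/w) * phi (τ₁/w) := by
    rw [hS1_def, hAset τ₁, Jz α (1-α) σZ τ₁ hσZ]
  have hJt2 : ∫ p in {p : ℝ × ℝ × ℝ | τ₂ ≤ A p}, p.1 ∂mu3 = (α/w) * phi (τ₂/w) := by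
    rw [hAset τ₂, Jt α (1-α) σZ τ₂ hα0]
  have hJs2 : ∫ p in {p : ℝ × ℝ × ℝ | τ₂ ≤ A p}, p.2.1 ∂mu3 = ((1-α)/w) * phi (τ₂/w) := by
    rw [hAset τ₂, Js α (1-α) σZ τ₂ hb0]
  have hJz2 : ∫ p in {p : ℝ × ℝ × ℝ | τ₂ ≤ A p}, p.2.2 ∂mu3 = (σZ/w) * phi (τ₂/w) := by
    rw [hAset τ₂, Jz α (1-α) σZ τ₂ hσZ]
  -- integrability of A
  have hIA : Integrable A mu3 := by
    rw [hA]
    exact ((integrable_fst_mu3.const_mul α).add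
      (integrable_s_mu3.const_mul (1-α))).add (integrable_z_mu3.const_mul σZ)
  -- A-integrals over sets via coordinates
  have hAint : ∀ (s : Set (ℝ × ℝ × ℝ)), MeasurableSet s →
      ∫ p in s, A p ∂mu3 = α * ∫ p in s, p.1 ∂mu3
        + (1-α) * ∫ p in s, p.2.1 ∂mu3 + σZ * ∫ p in s, p.2.2 ∂mu3 := by
    intro s hs
    have h1 : ∫ p in s, A p ∂mu3
        = ∫ p in s, (α * p.1 + (1-α) * p.2.1 + σZ * p.2.2) ∂mu3 := by
      apply setIntegral_congr_fun hs
      intro p _; rw [hA]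
    have i1 : IntegrableOn (fun p : ℝ × ℝ × ℝ => α * p.1) s mu3 :=
      (integrable_fst_mu3.const_mul α).integrableOn
    have i2 : IntegrableOn (fun p : ℝ × ℝ × ℝ => (1-α) * p.2.1) s mu3 :=
      (integrable_s_mu3.const_mul (1-α)).integrableOn
    have i3 : IntegrableOn (fun p : ℝ × ℝ × ℝ => σZ * p.2.2) s mu3 :=
      (integrable_z_mu3.const_mul σZ).integrableOn
    have i12 : IntegrableOn (fun p : ℝ × ℝ × ℝ => α * p.1 + (1-α) * p.2.1) s mu3 := i1.add i2
    rw [h1, integral_add i12 i3, integral_add i1 i2,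
      MeasureTheory.integral_const_mul, MeasureTheory.integral_const_mul, MeasureTheory.integral_const_mul]
  have hIA1 : ∫ p in S1, A p ∂mu3 = w * phi (τ₁/w) := by
    rw [hAint S1 hS1m, hJt1, hJs1, hJz1]
    field_simp
    linear_combination (-phi (τ₁/w)) * hw2
  have hIA2 : ∫ p in {p : ℝ × ℝ × ℝ | τ₂ ≤ A p}, A p ∂mu3 = w * phi (τ₂/w) := by
    rw [hAint _ (measurableSet_le measurable_const hcont.measurable), hJt2, hJs2, hJz2]
    field_simp
    linear_combination (-phi (τ₂/w)) * hw2
  -- measure positivity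
  have habs : (volume : Measure (ℝ × ℝ × ℝ)) ≪ mu3 := by
    have h1 : (volume : Measure ℝ) ≪ gaussianReal 0 1 :=
      gaussianReal_absolutelyContinuous' 0 one_ne_zero
    have h2 : (volume : Measure (ℝ × ℝ)) ≪ (gaussianReal 0 1).prod (gaussianReal 0 1) := by
      rw [Measure.volume_eq_prod]; exact h1.prod h1
    rw [Measure.volume_eq_prod, mu3_eq]; exact h1.prod h2
  have hopos : ∀ U : Set (ℝ × ℝ × ℝ), IsOpen U → U.Nonempty → 0 < mu3 U := by
    intro U hU hne
    rw [pos_iff_ne_zero]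
    intro h0
    have hv := habs h0
    exact (hU.measure_pos volume hne).ne' hv
  have hAval : ∀ x : ℝ, A (x/α, 0, 0) = x := by
    intro x
    rw [hA]
    simp only [mul_zero, add_zero]
    rw [mul_div_cancel₀ _ hα0.ne']
  have hposS1 : 0 < mu3 (A ⁻¹' (Ioi τ₁)) := by
    apply hopos _ (isOpen_Ioi.preimage hcont)
    exact ⟨((τ₁+1)/α, 0, 0), by simp only [mem_preimage, mem_Ioi, hAval]; linarith⟩
  have hposM : 0 < mu3 (A ⁻¹' (Ioo τ₂ τ₁)) := by
    apply hopos _ (isOpen_Ioo.preimage hcont)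
    refine ⟨(((τ₁+τ₂)/2)/α, 0, 0), ?_⟩
    simp only [mem_preimage, mem_Ioo, hAval]
    constructor <;> linarith
  have hm1 : 0 < mu3 S1 :=
    lt_of_lt_of_le hposS1 (measure_mono (fun p hp => by
      rw [hS1_def, Set.mem_setOf_eq]; exact le_of_lt hp))
  have hm2 : 0 < mu3 M := by
    refine lt_of_lt_of_le hposM (measure_mono (fun p hp => ?_))
    obtain ⟨h1, h2⟩ := hp
    exact ⟨le_of_lt h1, h2⟩
  have hmT : 0 < (mu3 S1).toReal := ENNReal.toReal_pos hm1.ne' (measure_ne_top _ _)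
  have hmM : 0 < (mu3 M).toReal := ENNReal.toReal_pos hm2.ne' (measure_ne_top _ _)
  -- strict inequalities
  have hst1 : 0 < ∫ p in S1, (A p - τ₁) ∂mu3 := by
    have hf1 : 0 ≤ᶠ[ae (mu3.restrict S1)] (fun p => A p - τ₁) := by
      rw [EventuallyLE, ae_restrict_iff' hS1m]
      refine Eventually.of_forall fun p hp => ?_
      rw [hS1_def, mem_setOf_eq] at hp
      simp only [Pi.zero_apply]
      linarith
    have hint1 : IntegrableOn (fun p : ℝ × ℝ × ℝ => A p - τ₁) S1 mu3 :=
      (hIA.sub (integrable_const τ₁)).integrableOn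
    rw [setIntegral_pos_iff_support_of_nonneg_ae hf1 hint1]
    refine lt_of_lt_of_le hposS1 (measure_mono (fun p hp => ?_))
    rw [mem_preimage, mem_Ioi] at hp
    refine ⟨?_, ?_⟩
    · simp only [Function.mem_support]
      intro h
      linarith [sub_eq_zero.mp h]
    · rw [hS1_def, mem_setOf_eq]; linarith
  have hst2 : 0 < ∫ p in M, (τ₁ - A p) ∂mu3 := by
    have hf2 : 0 ≤ᶠ[ae (mu3.restrict M)] (fun p => τ₁ - A p) := by
      rw [EventuallyLE, ae_restrict_iff' hMm]
      refine Eventually.of_forall fun p hp => ?_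
      rw [hM_def, mem_setOf_eq] at hp
      simp only [Pi.zero_apply]
      linarith [hp.2]
    have hint2 : IntegrableOn (fun p : ℝ × ℝ × ℝ => τ₁ - A p) M mu3 :=
      ((integrable_const τ₁).sub hIA).integrableOn
    rw [setIntegral_pos_iff_support_of_nonneg_ae hf2 hint2]
    refine lt_of_lt_of_le hm2 (measure_mono (fun p hp => ?_))
    rw [hM_def, mem_setOf_eq] at hp
    refine ⟨?_, ?_⟩
    · simp only [Function.mem_support]
      intro h
      have := sub_eq_zero.mp h
      linarith [hp.2]
    · rw [hM_def, mem_setOf_eq]; exact hp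
  -- expand the strict inequalities
  have hexp1 : ∫ p in S1, (A p - τ₁) ∂mu3
      = w * phi (τ₁/w) - (mu3 S1).toReal * τ₁ := by
    rw [integral_sub hIA.integrableOn (integrableOn_const (measure_ne_top _ _)),
      hIA1, setIntegral_const, smul_eq_mul, measureReal_def]
  have hexp2 : ∫ p in M, (τ₁ - A p) ∂mu3
      = (mu3 M).toReal * τ₁ - (w * phi (τ₂/w) - w * phi (τ₁/w)) := by
    have hsplitA : ∫ p in {p : ℝ × ℝ × ℝ | τ₂ ≤ A p}, A p ∂mu3
        = ∫ p in M, A p ∂mu3 + ∫ p in S1, A p ∂mu3 := by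
      rw [hS2eq, setIntegral_union hdisj hS1m hIA.integrableOn hIA.integrableOn]
    rw [integral_sub (integrableOn_const (C := τ₁) (measure_ne_top _ _)) hIA.integrableOn,
      setIntegral_const, smul_eq_mul, measureReal_def]
    rw [hIA2, hIA1] at hsplitA
    linarith [hsplitA]
  rw [hexp1] at hst1
  rw [hexp2] at hst2
  -- coordinate integrals over M
  have hsplitt : ∫ p in {p : ℝ × ℝ × ℝ | τ₂ ≤ A p}, p.1 ∂mu3
      = ∫ p in M, p.1 ∂mu3 + ∫ p in S1, p.1 ∂mu3 := by
    rw [hS2eq, setIntegral_union hdisj hS1m integrable_fst_mu3.integrableOn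
      integrable_fst_mu3.integrableOn]
  have hsplits : ∫ p in {p : ℝ × ℝ × ℝ | τ₂ ≤ A p}, p.2.1 ∂mu3
      = ∫ p in M, p.2.1 ∂mu3 + ∫ p in S1, p.2.1 ∂mu3 := by
    rw [hS2eq, setIntegral_union hdisj hS1m integrable_s_mu3.integrableOn
      integrable_s_mu3.integrableOn]
  have hIMt : ∫ p in M, p.1 ∂mu3 = (α/w) * phi (τ₂/w) - (α/w) * phi (τ₁/w) := by
    rw [hJt2, hJt1] at hsplitt; linarith
  have hIMs : ∫ p in M, p.2.1 ∂mu3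
      = ((1-α)/w) * phi (τ₂/w) - ((1-α)/w) * phi (τ₁/w) := by
    rw [hJs2, hJs1] at hsplits; linarith
  -- key inequality
  have hkey : (phi (τ₂/w) - phi (τ₁/w)) * (mu3 S1).toReal
      < phi (τ₁/w) * (mu3 M).toReal := by
    nlinarith [mul_pos hst1 hmM, mul_pos hst2 hmT, hwpos]
  -- D positivity
  have hD0 : 0 < D := by
    rw [hD]
    have h1q : 0 ≤ 1 - q := by linarith
    have := mul_nonneg h1q hmT.le
    nlinarith
  constructor
  · rw [gt_iff_lt, hMt, hIMt, hJt1, div_lt_div_iff₀ hD0 hmT, hD]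
    have hmul := mul_lt_mul_of_pos_left hkey (div_pos hα0 hwpos)
    nlinarith [hmul]
  · rw [gt_iff_lt, hMs, hIMs, hJs1, div_lt_div_iff₀ hD0 hmT, hD]
    have hmul := mul_lt_mul_of_pos_left hkey (div_pos hb0 hwpos)
    nlinarith [hmul]
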